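/- Let c₀ > 0, ξ₀ ∈ ℝ, A₀ : ℝ → ℂ bounded measurable, and suppose there is an open interval I ∋ ξ₀ with inf_{ξ∈I} |A₀(ξ)| > 0. Then there is C₂ > 0 such that for all t ≥ e, (∫_ℝ |A₀(ξ)|² / (1 + 2c₀(ξ - ξ₀)² |A₀(ξ)|² log t) dξ)^{1/2} ≥ C₂ (log t)^{-1/4}. -/

import Mathlib

open MeasureTheory

/-- If |A₀| is bounded below near ξ₀, then for t ≥ e the square root of
    ∫ |A₀(ξ)|²/(1+2c₀(ξ-ξ₀)²|A₀(ξ)|² log t) dξ is at least C₂ (log t)^{-1/4}. -/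
theorem stmt_10 (c₀ : ℝ) (hc₀ : 0 < c₀) (ξ₀ : ℝ) (A₀ : ℝ → ℂ) (hA₀m : Measurable A₀)
    (hA₀b : eLpNorm A₀ ⊤ volume < ⊤)
    (hI : ∃ r > (0 : ℝ), 0 < ⨅ ξ : Set.Ioo (ξ₀ - r) (ξ₀ + r), ‖A₀ (ξ : ℝ)‖) :
    ∃ C₂ > (0 : ℝ), ∀ t : ℝ, Real.exp 1 ≤ t →
      C₂ * (Real.log t) ^ (-(1 / 4) : ℝ)
        ≤ Real.sqrt (∫ ξ : ℝ,
            ‖A₀ ξ‖ ^ 2 / (1 + 2 * c₀ * (ξ - ξ₀) ^ 2 * ‖A₀ ξ‖ ^ 2 * Real.log t)) := by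
  obtain ⟨r, hr, hm⟩ := hI
  set m := ⨅ ξ : Set.Ioo (ξ₀ - r) (ξ₀ + r), ‖A₀ (ξ : ℝ)‖ with hmdef
  have hmle : ∀ ξ ∈ Set.Ioo (ξ₀ - r) (ξ₀ + r), m ≤ ‖A₀ ξ‖ := by
    intro ξ hξ
    have hbdd : BddBelow (Set.range fun ξ : Set.Ioo (ξ₀ - r) (ξ₀ + r) => ‖A₀ (ξ : ℝ)‖) := by
      refine ⟨0, ?_⟩; rintro x ⟨ξ', rfl⟩; exact norm_nonneg _
    exact ciInf_le hbdd (⟨ξ, hξ⟩ : Set.Ioo (ξ₀ - r) (ξ₀ + r))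
  clear hmdef
  clear_value m
  -- essential sup bound
  set K := (eLpNorm A₀ ⊤ volume).toReal with hK
  have hKae : ∀ᵐ ξ, ‖A₀ ξ‖ ≤ K := by
    filter_upwards [ae_le_eLpNormEssSup (f := A₀) (μ := volume)] with ξ hξ
    have h1 : (‖A₀ ξ‖₊ : ENNReal) ≤ eLpNorm A₀ ⊤ volume := by
      rw [eLpNorm_exponent_top]; exact_mod_cast hξ
    have := ENNReal.toReal_mono hA₀b.ne h1
    simpa [hK] using this
  clear hK
  clear_value K
  set r' := min r 1 with hr'def
  have hr' : 0 < r' := lt_min hr one_pos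
  have hr'le : r' ≤ 1 := min_le_right _ _
  have hr'r : r' ≤ r := min_le_left _ _
  clear hr'def
  clear_value r'
  refine ⟨Real.sqrt (2 * r' * m ^ 2 / (1 + 2 * c₀ * m ^ 2)),
    Real.sqrt_pos.mpr (by positivity), ?_⟩
  intro t ht
  set L := Real.log t with hLdef
  have hL1 : 1 ≤ L := by
    have := Real.log_le_log (Real.exp_pos 1) ht
    rwa [Real.log_exp] at this
  clear hLdef ht
  clear_value L
  have hLpos : 0 < L := lt_of_lt_of_le one_pos hL1
  have hsL : 1 ≤ Real.sqrt L := by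
    rw [show (1:ℝ) = Real.sqrt 1 by simp]; exact Real.sqrt_le_sqrt hL1
  have hsLpos : 0 < Real.sqrt L := lt_of_lt_of_le one_pos hsL
  set g := fun ξ : ℝ => ‖A₀ ξ‖ ^ 2 / (1 + 2 * c₀ * (ξ - ξ₀) ^ 2 * ‖A₀ ξ‖ ^ 2 * L) with hg
  have hden : ∀ ξ : ℝ, (1:ℝ) ≤ 1 + 2 * c₀ * (ξ - ξ₀) ^ 2 * ‖A₀ ξ‖ ^ 2 * L := by
    intro ξ
    have : (0:ℝ) ≤ 2 * c₀ * (ξ - ξ₀) ^ 2 * ‖A₀ ξ‖ ^ 2 * L := by positivity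
    linarith
  have hdenpos : ∀ ξ : ℝ, (0:ℝ) < 1 + 2 * c₀ * (ξ - ξ₀) ^ 2 * ‖A₀ ξ‖ ^ 2 * L :=
    fun ξ => lt_of_lt_of_le one_pos (hden ξ)
  have hgnonneg : ∀ ξ, 0 ≤ g ξ := fun ξ => div_nonneg (sq_nonneg _) (hdenpos ξ).le
  have hgmeas : AEStronglyMeasurable g volume := by
    apply Measurable.aestronglyMeasurable
    fun_prop
  -- integrability of g via the dominating function (K² + 1/(2c₀)) (1+(ξ-ξ₀)²)⁻¹
  have hint : Integrable g := by
    have hdom : Integrable (fun ξ : ℝ => (K ^ 2 + 1 / (2 * c₀)) * (1 + (ξ - ξ₀) ^ 2)⁻¹) := by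
      have h1 : Integrable (fun x : ℝ => (1 + x ^ 2)⁻¹) := integrable_inv_one_add_sq
      exact (h1.comp_sub_right ξ₀).const_mul _
    refine hdom.mono' hgmeas ?_
    filter_upwards [hKae] with ξ hξK
    have h2 : (0:ℝ) < 1 + (ξ - ξ₀) ^ 2 := by positivity
    rw [Real.norm_eq_abs, abs_of_nonneg (hgnonneg ξ)]
    have key : g ξ * (1 + (ξ - ξ₀) ^ 2) ≤ K ^ 2 + 1 / (2 * c₀) := by
      have hsplit : g ξ * (1 + (ξ - ξ₀) ^ 2) = g ξ + g ξ * (ξ - ξ₀) ^ 2 := by ring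
      have hb1 : g ξ ≤ K ^ 2 := by
        have h4 : g ξ ≤ ‖A₀ ξ‖ ^ 2 := by
          simp only [hg]
          exact div_le_self (sq_nonneg _) (hden ξ)
        refine h4.trans ?_
        have h0 : 0 ≤ ‖A₀ ξ‖ := norm_nonneg _
        nlinarith
      have hb2 : g ξ * (ξ - ξ₀) ^ 2 ≤ 1 / (2 * c₀) := by
        simp only [hg]
        rw [div_mul_eq_mul_div, div_le_div_iff₀ (hdenpos ξ) (by positivity)]
        have h3 : (0:ℝ) ≤ ‖A₀ ξ‖ ^ 2 * (ξ - ξ₀) ^ 2 := by positivity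
        nlinarith [mul_le_mul_of_nonneg_left hL1 (mul_nonneg (by positivity : (0:ℝ) ≤ 2*c₀) h3)]
      linarith [hsplit ▸ add_le_add hb1 hb2]
    calc g ξ = g ξ * (1 + (ξ - ξ₀) ^ 2) * (1 + (ξ - ξ₀) ^ 2)⁻¹ := by field_simp
      _ ≤ (K ^ 2 + 1 / (2 * c₀)) * (1 + (ξ - ξ₀) ^ 2)⁻¹ :=
          mul_le_mul_of_nonneg_right key (by positivity)
  -- the small interval
  set δ := r' / Real.sqrt L with hδdef
  have hδpos : 0 < δ := by positivity
  have hδle : δ ≤ r' := by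
    rw [hδdef, div_le_iff₀ hsLpos]
    nlinarith
  have hδ2L : δ ^ 2 * L = r' ^ 2 := by
    rw [hδdef, div_pow, Real.sq_sqrt hLpos.le, div_mul_cancel₀]
    exact hLpos.ne'
  set J := Set.Ioo (ξ₀ - δ) (ξ₀ + δ) with hJ
  -- pointwise lower bound on J
  have hlow : ∀ ξ ∈ J, m ^ 2 / (1 + 2 * c₀ * m ^ 2) ≤ g ξ := by
    intro ξ hξ
    have hmem : ξ ∈ Set.Ioo (ξ₀ - r) (ξ₀ + r) := by
      constructor
      · have h5 : ξ₀ - r ≤ ξ₀ - δ := by linarith [hδle.trans hr'r]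
        linarith [hξ.1]
      · linarith [hξ.2, hδle.trans hr'r]
    have hmleξ : m ≤ ‖A₀ ξ‖ := hmle ξ hmem
    have hxδ : (ξ - ξ₀) ^ 2 ≤ δ ^ 2 := by
      have h1 : -δ ≤ ξ - ξ₀ := by linarith [hξ.1]
      have h2 : ξ - ξ₀ ≤ δ := by linarith [hξ.2]
      nlinarith
    have hxL : (ξ - ξ₀) ^ 2 * L ≤ 1 := by
      have h6 := mul_le_mul_of_nonneg_right hxδ hLpos.le
      rw [hδ2L] at h6
      nlinarith
    have hf : m ^ 2 ≤ ‖A₀ ξ‖ ^ 2 := pow_le_pow_left₀ hm.le hmleξ 2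
    simp only [hg]
    rw [div_le_div_iff₀ (by positivity) (hdenpos ξ)]
    nlinarith [hf, mul_le_mul_of_nonneg_left hxL
      (by positivity : (0:ℝ) ≤ 2 * c₀ * m ^ 2 * ‖A₀ ξ‖ ^ 2)]
  -- integral lower bound
  have hvol : (volume J).toReal = 2 * δ := by
    simp only [hJ]
    rw [Real.volume_Ioo, ENNReal.toReal_ofReal (by linarith)]
    ring
  have hstep1 : m ^ 2 / (1 + 2 * c₀ * m ^ 2) * (2 * δ) ≤ ∫ ξ in J, g ξ := by
    have h7 := setIntegral_ge_of_const_le_real (c := m ^ 2 / (1 + 2 * c₀ * m ^ 2)) (f := g)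
      (measurableSet_Ioo : MeasurableSet J)
      (by simp only [hJ, Real.volume_Ioo]; exact ENNReal.ofReal_ne_top)
      hlow hint.integrableOn
    change m ^ 2 / (1 + 2 * c₀ * m ^ 2) * (volume J).toReal ≤ ∫ ξ in J, g ξ at h7
    rw [hvol] at h7
    linarith
  have hstep2 : (∫ ξ in J, g ξ) ≤ ∫ ξ, g ξ :=
    setIntegral_le_integral hint (Filter.Eventually.of_forall hgnonneg)
  have hmain : 2 * r' * m ^ 2 / (1 + 2 * c₀ * m ^ 2) * (Real.sqrt L)⁻¹ ≤ ∫ ξ, g ξ := by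
    have heq : m ^ 2 / (1 + 2 * c₀ * m ^ 2) * (2 * δ)
        = 2 * r' * m ^ 2 / (1 + 2 * c₀ * m ^ 2) * (Real.sqrt L)⁻¹ := by
      rw [hδdef]; field_simp
    linarith [heq ▸ hstep1, hstep2]
  -- conclude with sqrt
  have h1 : (Real.sqrt L)⁻¹ = L ^ (-(1 / 2) : ℝ) := by
    rw [Real.rpow_neg hLpos.le, ← Real.sqrt_eq_rpow]
  have hrpow : L ^ (-(1 / 4) : ℝ) = Real.sqrt ((Real.sqrt L)⁻¹) := by
    rw [h1, Real.sqrt_eq_rpow, ← Real.rpow_mul hLpos.le]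
    norm_num
  rw [hrpow, ← Real.sqrt_mul (by positivity)]
  exact Real.sqrt_le_sqrt hmain
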